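/- Let γ : ℕ → ℝ be a nonnegative summable sequence with PGF Γ(u) = Σ_{n=0}^∞ γ(n) u^n. Fix y ∈ ℕ and ρ ∈ (0, 1), and define α(n) = γ(n) · C(n, y) · ρ^y · (1−ρ)^{n−y} for n ≥ y and α(n) = 0 for n < y, where C(n, y) is the binomial coefficient. Then α is summable and for every s ∈ [0, 1]: Σ_{n=0}^∞ α(n) s^n = ((s·ρ)^y / y!) · Γ^{(y)}(s·(1−ρ)), where Γ^{(y)} denotes the y-th derivative of Γ. -/

import Mathlib

open scoped Nat

lemma aux_geo (a b : ℕ) {r : ℝ} (h0 : 0 < r) (h1 : r < 1) :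
    Summable fun n : ℕ => ((n : ℝ) + a) ^ b * r ^ n := by
  have hr : ‖r‖ < 1 := by rwa [Real.norm_eq_abs, abs_of_pos h0]
  have h := summable_pow_mul_geometric_of_norm_lt_one (R := ℝ) b hr
  have h2 : Summable fun n : ℕ => ((n + a : ℕ) : ℝ) ^ b * r ^ (n + a) :=
    (summable_nat_add_iff a).mpr h
  have h3 := h2.mul_right ((r ^ a)⁻¹)
  refine h3.congr fun n => ?_
  have : r ^ a ≠ 0 := pow_ne_zero _ h0.ne'
  push_cast
  rw [pow_add]
  field_simp

noncomputable def pgfG (γ : ℕ → ℝ) (y : ℕ) (x : ℝ) : ℝ :=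
  ∑' n : ℕ, γ (n + y) * ((n + y).descFactorial y : ℝ) * x ^ n

lemma descFact_cast_le (n y : ℕ) : ((n + y).descFactorial y : ℝ) ≤ ((n : ℝ) + y) ^ y := by
  have := Nat.descFactorial_le_pow (n + y) y
  calc ((n + y).descFactorial y : ℝ) ≤ (((n + y) ^ y : ℕ) : ℝ) := by exact_mod_cast this
    _ = ((n : ℝ) + y) ^ y := by push_cast; ring

lemma aux_summable (γ : ℕ → ℝ) (hnn : ∀ n, 0 ≤ γ n) (hsum : Summable γ) (y : ℕ)
    {x r : ℝ} (hx : |x| ≤ r) (h0 : 0 < r) (h1 : r < 1) :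
    Summable fun n : ℕ => γ (n + y) * ((n + y).descFactorial y : ℝ) * x ^ n := by
  set K := ∑' n, γ n with hKdef
  have hK : ∀ n, γ n ≤ K := fun n => hsum.le_tsum n fun m _ => hnn m
  have hKnn : 0 ≤ K := tsum_nonneg hnn
  apply Summable.of_norm
  have base := (aux_geo y y h0 h1).mul_left K
  refine Summable.of_nonneg_of_le (fun n => norm_nonneg _) ?_ base
  intro n
  rw [Real.norm_eq_abs, abs_mul, abs_mul, abs_of_nonneg (hnn _),
    abs_of_nonneg (by positivity : (0:ℝ) ≤ ((n + y).descFactorial y : ℝ)), abs_pow]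
  have hxn : |x| ^ n ≤ r ^ n := pow_le_pow_left₀ (abs_nonneg x) hx n
  calc γ (n + y) * ((n + y).descFactorial y : ℝ) * |x| ^ n
      ≤ K * ((n : ℝ) + y) ^ y * r ^ n :=
        mul_le_mul (mul_le_mul (hK _) (descFact_cast_le n y) (by positivity) hKnn)
          hxn (by positivity) (mul_nonneg hKnn (by positivity))
    _ = K * (((n : ℝ) + y) ^ y * r ^ n) := by ring

lemma aux_deriv (γ : ℕ → ℝ) (hnn : ∀ n, 0 ≤ γ n) (hsum : Summable γ) (y : ℕ)
    {x : ℝ} (hx : |x| < 1) :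
    HasDerivAt (pgfG γ y) (pgfG γ (y + 1) x) x := by
  set K := ∑' n, γ n with hKdef
  have hK : ∀ n, γ n ≤ K := fun n => hsum.le_tsum n fun m _ => hnn m
  have hKnn : 0 ≤ K := tsum_nonneg hnn
  set r : ℝ := (|x| + 1) / 2 with hrdef
  have habs := abs_nonneg x
  have h0 : 0 < r := by rw [hrdef]; linarith
  have hxr : |x| < r := by rw [hrdef]; linarith
  have h1 : r < 1 := by rw [hrdef]; linarith
  have hxt : x ∈ Set.Ioo (-r) r := ⟨neg_lt_of_abs_lt hxr, lt_of_abs_lt hxr⟩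
  have hu : Summable (fun n : ℕ =>
      (K * r⁻¹) * (((n : ℝ) + ((y + 1 : ℕ) : ℝ)) ^ (y + 1) * r ^ n)) :=
    (aux_geo (y + 1) (y + 1) h0 h1).mul_left _
  have hg : ∀ (n : ℕ) (z : ℝ), z ∈ Set.Ioo (-r) r →
      HasDerivAt (fun w : ℝ => γ (n + y) * ((n + y).descFactorial y : ℝ) * w ^ n)
        (γ (n + y) * ((n + y).descFactorial y : ℝ) * ((n : ℝ) * z ^ (n - 1))) z :=
    fun n z _ => (hasDerivAt_pow n z).const_mul _
  have hg' : ∀ (n : ℕ) (z : ℝ), z ∈ Set.Ioo (-r) r →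
      ‖γ (n + y) * ((n + y).descFactorial y : ℝ) * ((n : ℝ) * z ^ (n - 1))‖ ≤
        (K * r⁻¹) * (((n : ℝ) + ((y + 1 : ℕ) : ℝ)) ^ (y + 1) * r ^ n) := by
    intro n z hz
    have hzr : |z| ≤ r := le_of_lt (abs_lt.mpr ⟨hz.1, hz.2⟩)
    rcases Nat.eq_zero_or_pos n with hn | hn
    · subst hn
      simp only [Nat.cast_zero, zero_mul, mul_zero, norm_zero]
      positivity
    · rw [Real.norm_eq_abs, abs_mul, abs_mul, abs_mul, abs_of_nonneg (hnn _),
        abs_of_nonneg (by positivity : (0:ℝ) ≤ ((n + y).descFactorial y : ℝ)),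
        abs_of_nonneg (by positivity : (0:ℝ) ≤ (n : ℝ)), abs_pow]
      have hzp : |z| ^ (n - 1) ≤ r ^ (n - 1) := pow_le_pow_left₀ (abs_nonneg z) hzr _
      have hrp : r ^ (n - 1) = r ^ n * r⁻¹ := by
        rw [← pow_sub_one_mul hn.ne' r]
        field_simp
      have key : ((n + y).descFactorial y : ℝ) * (n : ℝ) ≤
          ((n : ℝ) + ((y + 1 : ℕ) : ℝ)) ^ (y + 1) := by
        calc ((n + y).descFactorial y : ℝ) * (n : ℝ)
            ≤ ((n : ℝ) + y) ^ y * (n : ℝ) :=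
              mul_le_mul_of_nonneg_right (descFact_cast_le n y) (by positivity)
          _ ≤ ((n : ℝ) + ((y + 1 : ℕ) : ℝ)) ^ y * ((n : ℝ) + ((y + 1 : ℕ) : ℝ)) :=
              mul_le_mul (pow_le_pow_left₀ (by positivity) (by push_cast; linarith) y)
                (by push_cast; linarith) (by positivity) (by positivity)
          _ = ((n : ℝ) + ((y + 1 : ℕ) : ℝ)) ^ (y + 1) := by rw [pow_succ]
      calc γ (n + y) * ((n + y).descFactorial y : ℝ) * ((n : ℝ) * |z| ^ (n - 1))
          = (γ (n + y) * (((n + y).descFactorial y : ℝ) * (n : ℝ))) * |z| ^ (n - 1) := by ring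
        _ ≤ (K * ((n : ℝ) + ((y + 1 : ℕ) : ℝ)) ^ (y + 1)) * r ^ (n - 1) :=
            mul_le_mul (mul_le_mul (hK _) key (by positivity) hKnn) hzp (by positivity)
              (mul_nonneg hKnn (by positivity))
        _ = (K * r⁻¹) * (((n : ℝ) + ((y + 1 : ℕ) : ℝ)) ^ (y + 1) * r ^ n) := by
            rw [hrp]; ring
  have hg0 : Summable fun n : ℕ => γ (n + y) * ((n + y).descFactorial y : ℝ) * x ^ n :=
    aux_summable γ hnn hsum y hxr.le h0 h1
  have hmain := hasDerivAt_tsum_of_isPreconnected hu isOpen_Ioo (convex_Ioo _ _).isPreconnected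
    hg hg' hxt hg0 hxt
  have hsum' : Summable fun n : ℕ =>
      γ (n + y) * ((n + y).descFactorial y : ℝ) * ((n : ℝ) * x ^ (n - 1)) :=
    Summable.of_norm (Summable.of_nonneg_of_le (fun n => norm_nonneg _)
      (fun n => hg' n x hxt) hu)
  have hval : (∑' n : ℕ, γ (n + y) * ((n + y).descFactorial y : ℝ) * ((n : ℝ) * x ^ (n - 1)))
      = pgfG γ (y + 1) x := by
    rw [hsum'.tsum_eq_zero_add]
    simp only [Nat.cast_zero, zero_mul, mul_zero, zero_add]
    refine tsum_congr fun n => ?_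
    have hidx : n + 1 + y = n + (y + 1) := by ring
    have hdf : (n + (y + 1)).descFactorial (y + 1) = (n + 1) * (n + (y + 1)).descFactorial y := by
      rw [Nat.descFactorial_succ]
      congr 1
      omega
    rw [hidx, hdf]
    push_cast
    ring_nf
  rw [show pgfG γ (y + 1) x = _ from hval.symm]
  exact hmain

lemma aux_iter (γ : ℕ → ℝ) (hnn : ∀ n, 0 ≤ γ n) (hsum : Summable γ) :
    ∀ (y : ℕ) {x : ℝ}, |x| < 1 →
      iteratedDeriv y (fun u => ∑' n : ℕ, γ n * u ^ n) x = pgfG γ y x := by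
  intro y
  induction y with
  | zero =>
    intro x hx
    rw [iteratedDeriv_zero, pgfG]
    exact tsum_congr fun n => by simp
  | succ y ih =>
    intro x hx
    rw [iteratedDeriv_succ]
    have hx' : x ∈ Set.Ioo (-1 : ℝ) 1 := ⟨(abs_lt.mp hx).1, (abs_lt.mp hx).2⟩
    have hev : iteratedDeriv y (fun u => ∑' n : ℕ, γ n * u ^ n) =ᶠ[nhds x] pgfG γ y := by
      filter_upwards [isOpen_Ioo.mem_nhds hx'] with z hz
      exact ih (abs_lt.mpr ⟨hz.1, hz.2⟩)
    rw [hev.deriv_eq, (aux_deriv γ hnn hsum y hx).deriv]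

/-- Evidence step of the PGF forward algorithm: if `α(n) = γ(n)·C(n,y)·ρʸ·(1−ρ)^{n−y}`
(for `n ≥ y`, zero otherwise), then `α` is summable and its PGF satisfies
`Σ α(n) sⁿ = ((s·ρ)ʸ / y!) · Γ^{(y)}(s·(1−ρ))` for all `s ∈ [0,1]`. -/
theorem pgf_evidence_step (γ : ℕ → ℝ) (hnn : ∀ n, 0 ≤ γ n) (hsum : Summable γ)
    (Γ : ℝ → ℝ) (hΓ : ∀ u, Γ u = ∑' n : ℕ, γ n * u ^ n)
    (y : ℕ) (ρ : ℝ) (hρ : ρ ∈ Set.Ioo (0 : ℝ) 1)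
    (α : ℕ → ℝ)
    (hα : ∀ n, α n =
      if y ≤ n then γ n * (n.choose y : ℝ) * ρ ^ y * (1 - ρ) ^ (n - y) else 0) :
    Summable α ∧
    ∀ s ∈ Set.Icc (0 : ℝ) 1,
      ∑' n : ℕ, α n * s ^ n =
        (s * ρ) ^ y / (y ! : ℝ) * iteratedDeriv y Γ (s * (1 - ρ)) := by
  obtain ⟨hρ0, hρ1⟩ := hρ
  have h1ρ : 0 ≤ 1 - ρ := by linarith
  have hbin : ∀ n, y ≤ n → (n.choose y : ℝ) * ρ ^ y * (1 - ρ) ^ (n - y) ≤ 1 := by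
    intro n hyn
    have hexp := add_pow ρ (1 - ρ) n
    have h1 : ρ + (1 - ρ) = 1 := by ring
    rw [h1, one_pow] at hexp
    have hmem : y ∈ Finset.range (n + 1) := Finset.mem_range.mpr (by omega)
    have hle := Finset.single_le_sum
      (f := fun k => ρ ^ k * (1 - ρ) ^ (n - k) * (n.choose k : ℝ))
      (fun k _ => mul_nonneg (mul_nonneg (pow_nonneg hρ0.le _) (pow_nonneg h1ρ _))
        (Nat.cast_nonneg _)) hmem
    calc (n.choose y : ℝ) * ρ ^ y * (1 - ρ) ^ (n - y)
        = ρ ^ y * (1 - ρ) ^ (n - y) * (n.choose y : ℝ) := by ring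
      _ ≤ ∑ k ∈ Finset.range (n + 1), ρ ^ k * (1 - ρ) ^ (n - k) * (n.choose k : ℝ) := hle
      _ = 1 := hexp.symm
  have hαnn : ∀ n, 0 ≤ α n := by
    intro n
    rw [hα]
    split
    · exact mul_nonneg (mul_nonneg (mul_nonneg (hnn n) (Nat.cast_nonneg _))
        (pow_nonneg hρ0.le _)) (pow_nonneg h1ρ _)
    · exact le_refl 0
  have hαle : ∀ n, α n ≤ γ n := by
    intro n
    rw [hα]
    split
    · rename_i h
      calc γ n * (n.choose y : ℝ) * ρ ^ y * (1 - ρ) ^ (n - y)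
          = γ n * ((n.choose y : ℝ) * ρ ^ y * (1 - ρ) ^ (n - y)) := by ring
        _ ≤ γ n * 1 := mul_le_mul_of_nonneg_left (hbin n h) (hnn n)
        _ = γ n := mul_one _
    · exact hnn n
  refine ⟨Summable.of_nonneg_of_le hαnn hαle hsum, ?_⟩
  intro s hs
  obtain ⟨hs0, hs1⟩ := hs
  have hxnn : 0 ≤ s * (1 - ρ) := mul_nonneg hs0 h1ρ
  have hxlt : |s * (1 - ρ)| < 1 := by
    rw [abs_of_nonneg hxnn]
    calc s * (1 - ρ) ≤ 1 * (1 - ρ) := mul_le_mul_of_nonneg_right hs1 h1ρ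
      _ = 1 - ρ := one_mul _
      _ < 1 := by linarith
  have hΓfun : Γ = fun u => ∑' n : ℕ, γ n * u ^ n := funext hΓ
  rw [hΓfun, aux_iter γ hnn hsum y hxlt, pgfG, ← tsum_mul_left]
  have hinj : Function.Injective (fun m : ℕ => m + y) := add_left_injective y
  have hsupp : (Function.support fun n => α n * s ^ n) ⊆ Set.range (fun m : ℕ => m + y) := by
    intro n hn
    rcases le_or_gt y n with h | h
    · exact ⟨n - y, by simp [Nat.sub_add_cancel h]⟩
    · exfalso
      apply hn
      show α n * s ^ n = 0
      rw [hα, if_neg (by omega), zero_mul]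
  rw [← hinj.tsum_eq hsupp]
  refine tsum_congr fun m => ?_
  show α (m + y) * s ^ (m + y) = _
  rw [hα, if_pos (Nat.le_add_left y m), Nat.add_sub_cancel]
  have hdc : ((m + y).descFactorial y : ℝ) = (y ! : ℝ) * ((m + y).choose y : ℝ) := by
    exact_mod_cast Nat.descFactorial_eq_factorial_mul_choose (m + y) y
  have hyfac : (y ! : ℝ) ≠ 0 := Nat.cast_ne_zero.mpr y.factorial_ne_zero
  rw [hdc, pow_add, mul_pow, mul_pow]
  field_simp
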